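/- arXiv:1911.13214 — 3 statements merged into one kernel-verified Lean document; each statement's English description precedes it below -/
import Mathlib

section
/- For all 1 ≤ s ≤ t ≤ L+1 and every memory bound m ≥ 0 such that C_opt(s,t,m) < ∞, there exists a valid memory-persistent schedule for the subchain from s to t whose peak memory is at most m and whose computation time equals C_opt(s,t,m). -/
/-!
Formal model of the checkpointing problem for back-propagation through a chain
of stages `1, …, L+1` (Beaumont et al., "Optimal checkpointing for heterogeneous
chains").

Data items are activations `a ℓ`, saved internal states `abar ℓ` and gradients
`delta ℓ`.  Operations are `Fall ℓ` (forward storing all intermediate data),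
`Fck ℓ` (forward keeping its input), `Fnone ℓ` (forward replacing its input by
its output) and `B ℓ` (backward step).  A schedule for the subchain from `s` to
`t` starts from memory `{a (s-1), delta t}` and must end having produced
`delta (s-1)`.
-/

namespace Checkpoint

inductive Data : Type
  | a (ℓ : ℕ)
  | abar (ℓ : ℕ)
  | delta (ℓ : ℕ)
  deriving DecidableEq

inductive Op : Type
  | Fall (ℓ : ℕ)
  | Fck (ℓ : ℕ)
  | Fnone (ℓ : ℕ)
  | B (ℓ : ℕ)
  deriving DecidableEq

/-- A chain of `L+1` stages: sizes of activations `wa`, of saved internal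
states `wbar`, of gradients `wdelta`; durations `uf`, `ub` and memory
overheads `of`, `ob` of forward and backward operations. -/
structure Chain where
  L : ℕ
  wa : ℕ → ℕ
  wbar : ℕ → ℕ
  wdelta : ℕ → ℕ
  uf : ℕ → ℕ
  ub : ℕ → ℕ
  of : ℕ → ℕ
  ob : ℕ → ℕ

def Op.stage : Op → ℕ
  | .Fall ℓ => ℓ
  | .Fck ℓ => ℓ
  | .Fnone ℓ => ℓ
  | .B ℓ => ℓ

def Op.duration (c : Chain) : Op → ℕ
  | .Fall ℓ => c.uf ℓ
  | .Fck ℓ => c.uf ℓ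
  | .Fnone ℓ => c.uf ℓ
  | .B ℓ => c.ub ℓ

def Data.size (c : Chain) : Data → ℕ
  | .a ℓ => c.wa ℓ
  | .abar ℓ => c.wbar ℓ
  | .delta ℓ => c.wdelta ℓ

/-- Executing one operation on memory `M`: `some M'` if all its inputs are
present in `M`, `none` otherwise.  `Fall ℓ` and `Fck ℓ` accept `a (ℓ-1)` or
`abar (ℓ-1)` as input and keep it; `Fnone ℓ` consumes `a (ℓ-1)`; `B ℓ`
consumes `delta ℓ` and `abar ℓ`, uses `abar (ℓ-1)` as third input if it is
present (keeping it), and otherwise consumes `a (ℓ-1)`. -/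
def Op.exec : Op → Finset Data → Option (Finset Data)
  | .Fall ℓ, M =>
      if Data.a (ℓ - 1) ∈ M ∨ Data.abar (ℓ - 1) ∈ M then
        some (insert (Data.abar ℓ) M) else none
  | .Fck ℓ, M =>
      if Data.a (ℓ - 1) ∈ M ∨ Data.abar (ℓ - 1) ∈ M then
        some (insert (Data.a ℓ) M) else none
  | .Fnone ℓ, M =>
      if Data.a (ℓ - 1) ∈ M then
        some (insert (Data.a ℓ) (M.erase (Data.a (ℓ - 1)))) else none
  | .B ℓ, M =>
      if Data.delta ℓ ∈ M ∧ Data.abar ℓ ∈ M ∧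
          (Data.a (ℓ - 1) ∈ M ∨ Data.abar (ℓ - 1) ∈ M) then
        some (insert (Data.delta (ℓ - 1))
          (if Data.abar (ℓ - 1) ∈ M then
            (M.erase (Data.delta ℓ)).erase (Data.abar ℓ)
          else
            ((M.erase (Data.delta ℓ)).erase (Data.abar ℓ)).erase (Data.a (ℓ - 1))))
      else none

/-- Executing a list of operations, returning the final memory contents. -/
def execList : Finset Data → List Op → Option (Finset Data)
  | M, [] => some M
  | M, op :: ops => (op.exec M).bind fun M' => execList M' ops

/-- The trace of memory states (before each operation, and after the last). -/
def memTrace : Finset Data → List Op → Option (List (Finset Data))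
  | M, [] => some [M]
  | M, op :: ops => (op.exec M).bind fun M' => (memTrace M' ops).map fun tr => M :: tr

/-- Initial memory contents of the subchain from `s` to `t`. -/
def startMem (s t : ℕ) : Finset Data := {Data.a (s - 1), Data.delta t}

/-- Total size of the data in memory, the size of the subchain input
`a (s-1)` being by convention not counted. -/
def memSize (c : Chain) (s : ℕ) (M : Finset Data) : ℕ :=
  ∑ d ∈ M.erase (Data.a (s - 1)), d.size c

/-- Memory usage during an operation executed from memory `M`, producing
memory `M'`: for a forward operation, the data in memory during its execution
are its input and its output (i.e. `M ∪ M'`); a backward step is executed with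
all the data of `M` in memory (its output `delta (ℓ-1)` only materializes at
completion).  The overhead of the operation is added. -/
def opUsage (c : Chain) (s : ℕ) (M M' : Finset Data) : Op → ℕ
  | .Fall ℓ => memSize c s (M ∪ M') + c.of ℓ
  | .Fck ℓ => memSize c s (M ∪ M') + c.of ℓ
  | .Fnone ℓ => memSize c s (M ∪ M') + c.of ℓ
  | .B ℓ => memSize c s M + c.ob ℓ

/-- Peak memory usage of a sequence of operations run from memory `M`
(`none` if some operation cannot be executed). -/
def peakMem (c : Chain) (s : ℕ) : Finset Data → List Op → Option ℕ
  | _, [] => some 0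
  | M, op :: ops =>
      (op.exec M).bind fun M' =>
        (peakMem c s M' ops).map fun p => max (opUsage c s M M' op) p

/-- Total computation time of a schedule. -/
def schedTime (c : Chain) (S : List Op) : ℕ := (S.map (Op.duration c)).sum

/-- A valid schedule for the subchain from `s` to `t`: it only uses operations
of stages `s, …, t`, every operation's inputs are present in memory when it is
executed, and the schedule ends having produced `delta (s-1)`. -/
def Valid (s t : ℕ) (S : List Op) : Prop :=
  (∀ op ∈ S, s ≤ op.stage ∧ op.stage ≤ t) ∧
  ∃ Mf, execList (startMem s t) S = some Mf ∧ Data.delta (s - 1) ∈ Mf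

/-- The peak memory of the schedule `S` for the subchain from `s` to `t` is at
most `m`. -/
def PeakLE (c : Chain) (s t m : ℕ) (S : List Op) : Prop :=
  ∃ p, peakMem c s (startMem s t) S = some p ∧ p ≤ m

/-- Auxiliary predicate for memory persistence: `prev` is the memory state
before the previous operation (if any) and `M` the current memory state.
A stored value may only be removed by a backward operation using it; hence a
forward operation `Fnone ℓ` may only consume a value `a (ℓ-1)` that was
produced by the immediately preceding operation (a transient value, which was
never stored). -/
def persistAux : Option (Finset Data) → Finset Data → List Op → Prop
  | _, _, [] => True
  | prev, M, op :: ops =>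
      (∀ ℓ, op = Op.Fnone ℓ → ∃ P, prev = some P ∧ Data.a (ℓ - 1) ∉ P) ∧
      ∀ M', op.exec M = some M' → persistAux (some M) M' ops

/-- A schedule is memory persistent if every stored value is kept in memory
until it is used by a backward operation. -/
def Persistent (s t : ℕ) (S : List Op) : Prop :=
  persistAux none (startMem s t) S

/-- `m_∅(s,t)`: memory needed to execute all the forward steps from `s` to `t`
without saving any activation, while `delta t` is stored. -/
def mNone (c : Chain) (s t : ℕ) : ℕ :=
  max (c.wdelta t + c.wa s + c.of s)
    ((Finset.Icc (s + 1) (t - 1)).sup fun j =>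
      c.wdelta t + c.wa (j - 1) + c.wa j + c.of j)

/-- `m_all(s,t)`: memory needed to run `Fall s` (with `delta t` stored) and the
backward step `B s`. -/
def mAll (c : Chain) (s t : ℕ) : ℕ :=
  max (c.wdelta t + c.wbar s + c.of s) (c.wdelta s + c.wbar s + c.ob s)

/-- The dynamic programming recurrence `C_opt(s,t,m)` for the optimal
computation time of a memory-persistent schedule for the subchain from `s` to
`t` under memory bound `m`. -/
noncomputable def Copt (c : Chain) (s t m : ℕ) : ℕ∞ :=
  if h : t ≤ s then
    (if mAll c s s ≤ m then ((c.uf s + c.ub s : ℕ) : ℕ∞) else ⊤)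
  else
    min
      (if mNone c s t ≤ m then
        (Finset.Icc (s + 1) t).attach.inf fun s' =>
          ((∑ k ∈ Finset.Ico s s'.1, c.uf k : ℕ) : ℕ∞)
            + Copt c s'.1 t (m - c.wa (s'.1 - 1)) + Copt c s (s'.1 - 1) m
      else ⊤)
      (if mAll c s t ≤ m then
        ((c.uf s : ℕ) : ℕ∞) + Copt c (s + 1) t (m - c.wbar s) + ((c.ub s : ℕ) : ℕ∞)
      else ⊤)
termination_by t - s
decreasing_by
  · have hs' := s'.2
    simp only [Finset.mem_Icc] at hs'
    omega
  · have hs' := s'.2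
    simp only [Finset.mem_Icc] at hs'
    omega
  · omega


/-! ### Auxiliary lemmas -/

lemma execList_append (M : Finset Data) (S1 S2 : List Op) :
    execList M (S1 ++ S2) = (execList M S1).bind fun M1 => execList M1 S2 := by
  induction S1 generalizing M with
  | nil => simp [execList]
  | cons op S1 ih =>
    simp only [List.cons_append, execList]
    cases h : op.exec M <;> simp [ih]

lemma peakMem_append {c : Chain} {s : ℕ} {M M1 : Finset Data} {S1 S2 : List Op} {p1 p2 : ℕ}
    (h1 : execList M S1 = some M1) (hp1 : peakMem c s M S1 = some p1)
    (hp2 : peakMem c s M1 S2 = some p2) :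
    peakMem c s M (S1 ++ S2) = some (max p1 p2) := by
  induction S1 generalizing M p1 with
  | nil =>
      simp [execList] at h1; subst h1
      simp [peakMem] at hp1; subst hp1
      simpa using hp2
  | cons op S1 ih =>
      simp only [execList, peakMem, List.cons_append] at h1 hp1 ⊢
      cases h : op.exec M with
      | none => simp [h] at h1
      | some M' =>
          simp only [h, Option.bind_some] at h1 hp1 ⊢
          cases hq : peakMem c s M' S1 with
          | none => simp [hq] at hp1
          | some q =>
              rw [hq, Option.map_some, Option.some.injEq] at hp1
              rw [ih h1 hq, Option.map_some, Option.some.injEq, ← hp1]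
              exact (max_assoc _ _ _).symm

lemma persistAux_append {M M1 : Finset Data} {S1 S2 : List Op} {q : Option (Finset Data)}
    (h1 : execList M S1 = some M1) (hp : persistAux q M S1)
    (hq : ∀ q', persistAux q' M1 S2) :
    persistAux q M (S1 ++ S2) := by
  induction S1 generalizing q M with
  | nil =>
      simp [execList] at h1; subst h1; exact hq q
  | cons op S1 ih =>
      obtain ⟨hF, hrec⟩ := hp
      refine ⟨hF, fun M' hM' => ?_⟩
      simp only [execList] at h1
      rw [hM'] at h1
      simp only [Option.bind_some] at h1
      exact ih h1 (hrec M' hM')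

lemma schedTime_append (c : Chain) (S1 S2 : List Op) :
    schedTime c (S1 ++ S2) = schedTime c S1 + schedTime c S2 := by
  simp [schedTime]

/-! ### memSize lemmas -/

lemma memSize_insert_input (c : Chain) (s : ℕ) (M : Finset Data) :
    memSize c s (insert (Data.a (s - 1)) M) = memSize c s M := by
  unfold memSize
  rw [Finset.erase_insert_eq_erase]

lemma memSize_insert (c : Chain) (s : ℕ) {x : Data} {M : Finset Data}
    (hx : x ≠ Data.a (s - 1)) (hxM : x ∉ M) :
    memSize c s (insert x M) = x.size c + memSize c s M := by
  unfold memSize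
  rw [Finset.erase_insert_of_ne hx, Finset.sum_insert (by simp [hxM])]

lemma memSize_le_shift (c : Chain) (s s' : ℕ) (M : Finset Data) :
    memSize c s M ≤ memSize c s' M + c.wa (s' - 1) := by
  unfold memSize
  calc ∑ d ∈ M.erase (Data.a (s - 1)), d.size c
      ≤ ∑ d ∈ M, d.size c := Finset.sum_le_sum_of_subset (Finset.erase_subset _ _)
    _ ≤ ∑ d ∈ M.erase (Data.a (s' - 1)), d.size c + c.wa (s' - 1) := by
        by_cases h : Data.a (s' - 1) ∈ M
        · rw [← Finset.sum_erase_add M _ h]; rfl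
        · rw [Finset.erase_eq_of_notMem h]; exact Nat.le_add_right _ _


/-! ### Simulation A : adding the untouched input `a (s-1)` -/

lemma simA_exec {s : ℕ} (hs : 1 ≤ s) {op : Op} (hst : s + 1 ≤ op.stage)
    {M M1 : Finset Data} (h : op.exec M = some M1) :
    op.exec (insert (Data.a (s - 1)) M) = some (insert (Data.a (s - 1)) M1) := by
  have cases_op : ∀ P : Op → Prop, (∀ ℓ, P (.Fall ℓ)) → (∀ ℓ, P (.Fck ℓ)) →
      (∀ ℓ, P (.Fnone ℓ)) → (∀ ℓ, P (.B ℓ)) → P op := by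
    intro P h1 h2 h3 h4; cases op <;> first | apply h1 | apply h2 | apply h3 | apply h4
  cases op with
  | Fall ℓ =>
      simp only [Op.stage] at hst
      simp only [Op.exec] at h ⊢
      split_ifs at h with hc
      · rw [if_pos (by simp only [Finset.mem_insert]; tauto)]
        injection h with h
        rw [← h, Finset.insert_comm]
  | Fck ℓ =>
      simp only [Op.stage] at hst
      simp only [Op.exec] at h ⊢
      split_ifs at h with hc
      · rw [if_pos (by simp only [Finset.mem_insert]; tauto)]
        injection h with h
        rw [← h, Finset.insert_comm]
  | Fnone ℓ =>
      simp only [Op.stage] at hst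
      simp only [Op.exec] at h ⊢
      have hne : Data.a (s - 1) ≠ Data.a (ℓ - 1) := by simp only [ne_eq, Data.a.injEq]; omega
      split_ifs at h with hc
      · rw [if_pos (Finset.mem_insert_of_mem hc)]
        injection h with h
        rw [← h, Finset.erase_insert_of_ne hne, Finset.insert_comm]
  | B ℓ =>
      simp only [Op.stage] at hst
      simp only [Op.exec] at h ⊢
      have hne : Data.a (s - 1) ≠ Data.a (ℓ - 1) := by simp only [ne_eq, Data.a.injEq]; omega
      have habar : (Data.abar (ℓ - 1) ∈ insert (Data.a (s - 1)) M) ↔ Data.abar (ℓ - 1) ∈ M := by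
        simp
      split_ifs at h with hc hb
      · obtain ⟨hc1, hc2, hc3⟩ := hc
        injection h with h
        rw [if_pos ⟨Finset.mem_insert_of_mem hc1, Finset.mem_insert_of_mem hc2,
          by simp only [Finset.mem_insert]; tauto⟩, if_pos (habar.mpr hb), ← h,
          Finset.erase_insert_of_ne (by simp), Finset.erase_insert_of_ne (by simp),
          Finset.insert_comm]
      · obtain ⟨hc1, hc2, hc3⟩ := hc
        injection h with h
        rw [if_pos ⟨Finset.mem_insert_of_mem hc1, Finset.mem_insert_of_mem hc2,
          by simp only [Finset.mem_insert]; tauto⟩, if_neg (fun hx => hb (habar.mp hx)), ← h,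
          Finset.erase_insert_of_ne (by simp), Finset.erase_insert_of_ne (by simp),
          Finset.erase_insert_of_ne hne, Finset.insert_comm]

lemma opUsage_simA (c : Chain) (s s' : ℕ) (op : Op) (M M1 : Finset Data) :
    opUsage c s (insert (Data.a (s - 1)) M) (insert (Data.a (s - 1)) M1) op
      ≤ opUsage c s' M M1 op + c.wa (s' - 1) := by
  have hU : memSize c s (insert (Data.a (s - 1)) M ∪ insert (Data.a (s - 1)) M1)
      ≤ memSize c s' (M ∪ M1) + c.wa (s' - 1) := by
    rw [Finset.insert_union, Finset.union_insert, Finset.insert_idem,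
      memSize_insert_input]
    exact memSize_le_shift c s s' (M ∪ M1)
  have hBle : memSize c s (insert (Data.a (s - 1)) M) ≤ memSize c s' M + c.wa (s' - 1) := by
    rw [memSize_insert_input]; exact memSize_le_shift c s s' M
  cases op <;> simp only [opUsage] <;> omega

lemma simA (c : Chain) {s : ℕ} (s' : ℕ) (hs : 1 ≤ s) :
    ∀ (S : List Op) (M F : Finset Data) (p : ℕ),
      (∀ op ∈ S, s + 1 ≤ op.stage) →
      execList M S = some F →
      peakMem c s' M S = some p →
      execList (insert (Data.a (s - 1)) M) S = some (insert (Data.a (s - 1)) F) ∧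
      (∃ p', peakMem c s (insert (Data.a (s - 1)) M) S = some p' ∧ p' ≤ p + c.wa (s' - 1)) ∧
      (∀ q q', persistAux q M S →
        (q = none ∨ ∃ P, q = some P ∧ q' = some (insert (Data.a (s - 1)) P)) →
        persistAux q' (insert (Data.a (s - 1)) M) S) := by
  intro S
  induction S with
  | nil =>
      intro M F p _ hex hpk
      simp [execList] at hex; subst hex
      simp [peakMem] at hpk
      refine ⟨rfl, ⟨0, by simp [peakMem], by omega⟩, fun q q' _ _ => trivial⟩
  | cons op S ih =>
      intro M F p hst hex hpk
      have hop := hst op (by simp)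
      simp only [execList, peakMem] at hex hpk
      cases h : op.exec M with
      | none => simp [h] at hex
      | some M' =>
          simp only [h, Option.bind_some] at hex hpk
          cases hq : peakMem c s' M' S with
          | none => simp [hq] at hpk
          | some pS =>
              rw [hq, Option.map_some, Option.some.injEq] at hpk
              have hE := simA_exec hs hop h
              obtain ⟨ihE, ⟨p', ihP, ihPle⟩, ihPer⟩ :=
                ih M' F pS (fun o ho => hst o (by simp [ho])) hex hq
              refine ⟨?_, ⟨?_, ?_, ?_⟩, ?_⟩
              · simp only [execList, hE, Option.bind_some]; exact ihE
              · exact max (opUsage c s (insert (Data.a (s-1)) M) (insert (Data.a (s-1)) M') op) p'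
              · simp only [peakMem, hE, Option.bind_some, ihP, Option.map_some]
              · have h1 := opUsage_simA c s s' op M M'
                omega
              · intro q q' hper hrel
                obtain ⟨hF, hrec⟩ := hper
                refine ⟨?_, ?_⟩
                · intro ℓ hℓ
                  obtain ⟨P, hP, hPn⟩ := hF ℓ hℓ
                  rcases hrel with hrel | ⟨P', hP', hq'⟩
                  · rw [hrel] at hP; exact absurd hP (by simp)
                  · rw [hP'] at hP; injection hP with hP; subst hP
                    refine ⟨_, hq', ?_⟩
                    simp only [Finset.mem_insert]
                    push_neg
                    refine ⟨?_, hPn⟩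
                    subst hℓ
                    simp only [Op.stage] at hop
                    simp only [ne_eq, Data.a.injEq]
                    omega
                · intro M'' hM''
                  rw [hE] at hM''
                  injection hM'' with hM''
                  subst hM''
                  exact ihPer (some M) (some (insert (Data.a (s-1)) M)) (hrec M' h)
                    (Or.inr ⟨M, rfl, rfl⟩)

/-! ### Simulation B : replacing the input `a s` by `abar s` (plus `a (s-1)`) -/

/-- The memory transformation for simulation B. -/
def Tb (s : ℕ) (M : Finset Data) : Finset Data :=
  insert (Data.abar s) (insert (Data.a (s - 1)) (M.erase (Data.a s)))

lemma mem_Tb {s : ℕ} {M : Finset Data} {d : Data} :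
    d ∈ Tb s M ↔ d = Data.abar s ∨ d = Data.a (s - 1) ∨ (d ∈ M ∧ d ≠ Data.a s) := by
  simp [Tb, Finset.mem_insert, Finset.mem_erase, and_comm]

lemma Tb_insert {s : ℕ} {M : Finset Data} {d : Data}
    (h1 : d ≠ Data.a s) :
    Tb s (insert d M) = insert d (Tb s M) := by
  ext x
  simp only [mem_Tb, Finset.mem_insert]
  constructor
  · rintro (h | h | ⟨(h | h), h'⟩) <;> tauto
  · rintro (h | h | h | h) <;> subst_eqs <;> tauto

lemma Tb_erase {s : ℕ} {M : Finset Data} {d : Data}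
    (h1 : d ≠ Data.a s) (h2 : d ≠ Data.abar s) (h3 : d ≠ Data.a (s - 1)) :
    Tb s (M.erase d) = (Tb s M).erase d := by
  ext x
  simp only [mem_Tb, Finset.mem_erase]
  constructor
  · rintro (h | h | ⟨⟨hx, h⟩, h'⟩) <;> subst_eqs <;> tauto
  · rintro ⟨hx, (h | h | h)⟩ <;> tauto

lemma simB_exec {s : ℕ} (hs : 1 ≤ s) {op : Op} (hst : s + 1 ≤ op.stage)
    (hF : op ≠ Op.Fnone (s + 1)) {M M1 : Finset Data} (habar : Data.abar s ∉ M)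
    (h : op.exec M = some M1) :
    Data.abar s ∉ M1 ∧ op.exec (Tb s M) = some (Tb s M1) := by
  have hda : ∀ j, s + 1 ≤ j → (Data.a j ∈ Tb s M ↔ Data.a j ∈ M) := by
    intro j hj
    have h1 : ¬ (j = s - 1) := by omega
    have h2 : ¬ (j = s) := by omega
    simp [mem_Tb, h1, h2]
  have hdbar : ∀ j, s + 1 ≤ j → (Data.abar j ∈ Tb s M ↔ Data.abar j ∈ M) := by
    intro j hj
    have h1 : ¬ (j = s) := by omega
    simp [mem_Tb, h1]
  have hddel : ∀ j, (Data.delta j ∈ Tb s M ↔ Data.delta j ∈ M) := by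
    intro j
    simp [mem_Tb]
  cases op with
  | Fall ℓ =>
      simp only [Op.stage] at hst
      simp only [Op.exec] at h ⊢
      split_ifs at h with hc
      · injection h with h
        constructor
        · rw [← h]; simp only [Finset.mem_insert]
          push_neg
          exact ⟨by simp only [ne_eq, Data.abar.injEq]; omega, habar⟩
        · rw [if_pos ?_, ← h, Tb_insert (by simp)]
          by_cases hℓ : ℓ = s + 1
          · subst hℓ; right; rw [mem_Tb]; simp
          · rcases hc with hc | hc
            · left; rw [hda (ℓ-1) (by omega)]; exact hc
            · right; rw [hdbar (ℓ-1) (by omega)]; exact hc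
  | Fck ℓ =>
      simp only [Op.stage] at hst
      simp only [Op.exec] at h ⊢
      split_ifs at h with hc
      · injection h with h
        constructor
        · rw [← h]; simp only [Finset.mem_insert]
          push_neg
          exact ⟨by simp, habar⟩
        · rw [if_pos ?_, ← h, Tb_insert (by simp only [ne_eq, Data.a.injEq]; omega)]
          by_cases hℓ : ℓ = s + 1
          · subst hℓ; right; rw [mem_Tb]; simp
          · rcases hc with hc | hc
            · left; rw [hda (ℓ-1) (by omega)]; exact hc
            · right; rw [hdbar (ℓ-1) (by omega)]; exact hc
  | Fnone ℓ =>
      simp only [Op.stage] at hst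
      have hℓ : s + 2 ≤ ℓ := by
        rcases Nat.lt_or_ge ℓ (s + 2) with h' | h'
        · exfalso; exact hF (by congr 1; omega)
        · exact h'
      simp only [Op.exec] at h ⊢
      split_ifs at h with hc
      · injection h with h
        constructor
        · rw [← h]; simp only [Finset.mem_insert, Finset.mem_erase]
          push_neg
          exact ⟨by simp, fun _ => habar⟩
        · rw [if_pos ((hda (ℓ-1) (by omega)).mpr hc), ← h,
            Tb_insert (by simp only [ne_eq, Data.a.injEq]; omega),
            Tb_erase (by simp only [ne_eq, Data.a.injEq]; omega) (by simp)
              (by simp only [ne_eq, Data.a.injEq]; omega)]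
  | B ℓ =>
      simp only [Op.stage] at hst
      simp only [Op.exec] at h ⊢
      by_cases hℓ : ℓ = s + 1
      · subst hℓ
        split_ifs at h with hc hb
        · -- abar s ∈ M : impossible
          exact absurd hb (by simpa using habar)
        · obtain ⟨hc1, hc2, hc3⟩ := hc
          have hc3' : Data.a s ∈ M := by
            rcases hc3 with h' | h'
            · simpa using h'
            · exact absurd h' (by simpa using habar)
          injection h with h
          have hsimp : s + 1 - 1 = s := by omega
          rw [hsimp] at h ⊢
          constructor
          · rw [← h]
            simp only [Finset.mem_insert, Finset.mem_erase]
            push_neg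
            refine ⟨by simp, fun _ _ _ => habar⟩
          · rw [if_pos ⟨(hddel (s+1)).mpr hc1, (hdbar (s+1) (by omega)).mpr hc2,
              Or.inr (by rw [mem_Tb]; simp)⟩,
              if_pos (by rw [mem_Tb]; simp)]
            congr 1
            have hcomm : ((M.erase (Data.delta (s+1))).erase (Data.abar (s+1))).erase (Data.a s)
                = ((M.erase (Data.a s)).erase (Data.delta (s+1))).erase (Data.abar (s+1)) := by
              ext x; simp only [Finset.mem_erase]; tauto
            have hTba : Tb s (M.erase (Data.a s)) = Tb s M := by
              simp [Tb, Finset.erase_idem]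
            rw [← h, hcomm, Tb_insert (by simp),
              Tb_erase (by simp) (by simp only [ne_eq, Data.abar.injEq]; omega) (by simp),
              Tb_erase (by simp) (by simp) (by simp),
              hTba]
      · have hℓ2 : s + 2 ≤ ℓ := by omega
        split_ifs at h with hc hb
        · obtain ⟨hc1, hc2, hc3⟩ := hc
          injection h with h
          have hc3' : Data.a (ℓ-1) ∈ Tb s M ∨ Data.abar (ℓ-1) ∈ Tb s M := by
            rcases hc3 with h' | h'
            · exact Or.inl ((hda (ℓ-1) (by omega)).mpr h')
            · exact Or.inr ((hdbar (ℓ-1) (by omega)).mpr h')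
          constructor
          · rw [← h]
            simp only [Finset.mem_insert, Finset.mem_erase]
            push_neg
            refine ⟨by simp, fun _ _ => habar⟩
          · rw [if_pos ⟨(hddel ℓ).mpr hc1, (hdbar ℓ (by omega)).mpr hc2, hc3'⟩,
              if_pos ((hdbar (ℓ-1) (by omega)).mpr hb), ← h,
              Tb_insert (by simp), Tb_erase (by simp) (by simp only [ne_eq, Data.abar.injEq]; omega)
                (by simp), Tb_erase (by simp) (by simp) (by simp)]
        · obtain ⟨hc1, hc2, hc3⟩ := hc
          injection h with h
          have hc3' : Data.a (ℓ-1) ∈ Tb s M ∨ Data.abar (ℓ-1) ∈ Tb s M := by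
            rcases hc3 with h' | h'
            · exact Or.inl ((hda (ℓ-1) (by omega)).mpr h')
            · exact Or.inr ((hdbar (ℓ-1) (by omega)).mpr h')
          constructor
          · rw [← h]
            simp only [Finset.mem_insert, Finset.mem_erase]
            push_neg
            refine ⟨by simp, fun _ _ _ => habar⟩
          · rw [if_pos ⟨(hddel ℓ).mpr hc1, (hdbar ℓ (by omega)).mpr hc2, hc3'⟩,
              if_neg (fun hx => hb ((hdbar (ℓ-1) (by omega)).mp hx)), ← h,
              Tb_insert (by simp), Tb_erase (by simp only [ne_eq, Data.a.injEq]; omega)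
                (by simp) (by simp only [ne_eq, Data.a.injEq]; omega),
              Tb_erase (by simp) (by simp only [ne_eq, Data.abar.injEq]; omega) (by simp),
              Tb_erase (by simp) (by simp) (by simp)]

lemma Tb_union {s : ℕ} (M M1 : Finset Data) : Tb s M ∪ Tb s M1 = Tb s (M ∪ M1) := by
  ext x; simp only [Finset.mem_union, mem_Tb]; tauto

lemma memSize_Tb (c : Chain) {s : ℕ} {M : Finset Data} (habar : Data.abar s ∉ M) :
    memSize c s (Tb s M) ≤ c.wbar s + memSize c (s + 1) M := by
  have h1 : Data.abar s ∉ insert (Data.a (s - 1)) (M.erase (Data.a s)) := by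
    simp only [Finset.mem_insert, Finset.mem_erase]
    push_neg
    exact ⟨by simp, fun _ => habar⟩
  rw [Tb, memSize_insert c s (by simp) h1, memSize_insert_input]
  have h2 : memSize c s (M.erase (Data.a s)) ≤ memSize c (s + 1) M := by
    unfold memSize
    have h3 : s + 1 - 1 = s := by omega
    rw [h3]
    exact Finset.sum_le_sum_of_subset (Finset.erase_subset _ _)
  simp only [Data.size]
  omega

lemma opUsage_simB (c : Chain) {s : ℕ} (op : Op) {M M1 : Finset Data}
    (habarM : Data.abar s ∉ M) (habarM1 : Data.abar s ∉ M1) :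
    opUsage c s (Tb s M) (Tb s M1) op ≤ opUsage c (s + 1) M M1 op + c.wbar s := by
  have hu : Data.abar s ∉ M ∪ M1 := by simp [habarM, habarM1]
  have h1 := memSize_Tb c (M := M ∪ M1) hu
  have h2 := memSize_Tb c (M := M) habarM
  cases op <;> simp only [opUsage, Tb_union] <;> omega

lemma simB (c : Chain) {s : ℕ} (hs : 1 ≤ s) :
    ∀ (S : List Op) (M F : Finset Data) (p : ℕ),
      (∀ op ∈ S, s + 1 ≤ op.stage) →
      Op.Fnone (s + 1) ∉ S →
      Data.abar s ∉ M →
      execList M S = some F →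
      peakMem c (s + 1) M S = some p →
      execList (Tb s M) S = some (Tb s F) ∧
      (∃ p', peakMem c s (Tb s M) S = some p' ∧ p' ≤ p + c.wbar s) ∧
      (∀ q q', persistAux q M S →
        (q = none ∨ ∃ P, q = some P ∧ q' = some (Tb s P)) →
        persistAux q' (Tb s M) S) := by
  intro S
  induction S with
  | nil =>
      intro M F p _ _ _ hex hpk
      simp [execList] at hex; subst hex
      refine ⟨rfl, ⟨0, by simp [peakMem], by omega⟩, fun q q' _ _ => trivial⟩
  | cons op S ih =>
      intro M F p hst hFn habar hex hpk
      have hop := hst op (by simp)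
      have hopF : op ≠ Op.Fnone (s + 1) := fun h => hFn (by simp [h])
      simp only [execList, peakMem] at hex hpk
      cases h : op.exec M with
      | none => simp [h] at hex
      | some M' =>
          simp only [h, Option.bind_some] at hex hpk
          cases hq : peakMem c (s + 1) M' S with
          | none => simp [hq] at hpk
          | some pS =>
              rw [hq, Option.map_some, Option.some.injEq] at hpk
              obtain ⟨habar', hE⟩ := simB_exec hs hop hopF habar h
              obtain ⟨ihE, ⟨p', ihP, ihPle⟩, ihPer⟩ :=
                ih M' F pS (fun o ho => hst o (by simp [ho]))
                  (fun hx => hFn (by simp [hx])) habar' hex hq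
              refine ⟨?_, ⟨?_, ?_, ?_⟩, ?_⟩
              · simp only [execList, hE, Option.bind_some]; exact ihE
              · exact max (opUsage c s (Tb s M) (Tb s M') op) p'
              · simp only [peakMem, hE, Option.bind_some, ihP, Option.map_some]
              · have h1 := opUsage_simB c op habar habar'
                omega
              · intro q q' hper hrel
                obtain ⟨hF2, hrec⟩ := hper
                refine ⟨?_, ?_⟩
                · intro ℓ hℓ
                  obtain ⟨P, hP, hPn⟩ := hF2 ℓ hℓ
                  rcases hrel with hrel | ⟨P', hP', hq'⟩
                  · rw [hrel] at hP; exact absurd hP (by simp)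
                  · rw [hP'] at hP; injection hP with hP; subst hP
                    refine ⟨_, hq', ?_⟩
                    have hℓ2 : s + 2 ≤ ℓ := by
                      subst hℓ
                      simp only [Op.stage] at hop
                      rcases Nat.lt_or_ge ℓ (s + 2) with h' | h'
                      · exact absurd (by congr 1; omega : Op.Fnone ℓ = Op.Fnone (s+1))
                          (by exact_mod_cast hopF)
                      · exact h'
                    rw [mem_Tb]
                    push_neg
                    refine ⟨by simp, by simp only [ne_eq, Data.a.injEq]; omega, fun h' => ?_⟩
                    exact absurd h' hPn
                · intro M'' hM''
                  rw [hE] at hM''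
                  injection hM'' with hM''
                  subst hM''
                  exact ihPer (some M) (some (Tb s M)) (hrec M' h) (Or.inr ⟨M, rfl, rfl⟩)

/-! ### Explicit memory computations -/

lemma memSize_start (c : Chain) (s t : ℕ) :
    memSize c s ({Data.a (s - 1), Data.delta t} : Finset Data) = c.wdelta t := by
  have : ({Data.a (s - 1), Data.delta t} : Finset Data)
      = insert (Data.a (s - 1)) {Data.delta t} := rfl
  rw [this, memSize_insert_input]
  unfold memSize
  rw [Finset.erase_eq_of_notMem (by simp)]
  simp [Data.size]

lemma memSize_triple (c : Chain) {s j : ℕ} (t : ℕ) (hj : ¬ j = s - 1) :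
    memSize c s ({Data.a (s - 1), Data.delta t, Data.a j} : Finset Data)
      = c.wdelta t + c.wa j := by
  have h1 : ({Data.a (s - 1), Data.delta t, Data.a j} : Finset Data)
      = insert (Data.a (s - 1)) {Data.delta t, Data.a j} := rfl
  have h2 : memSize c s ({Data.a j} : Finset Data) = c.wa j := by
    unfold memSize
    rw [Finset.erase_eq_of_notMem (by simp [Data.a.injEq]; omega)]
    simp [Data.size]
  rw [h1, memSize_insert_input,
    memSize_insert c s (by simp) (by simp [Data.a.injEq]), h2]
  simp [Data.size]

/-! ### The forward phase -/

lemma fnone_chain (c : Chain) {s t m : ℕ} (hs : 1 ≤ s) :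
    ∀ (n j : ℕ), s ≤ j →
      (∀ i, j + 1 ≤ i → i ≤ j + n → c.wdelta t + c.wa (i - 1) + c.wa i + c.of i ≤ m) →
      (∀ op ∈ (List.range n).map (fun i => Op.Fnone (j + 1 + i)),
          j + 1 ≤ op.stage ∧ op.stage ≤ j + n) ∧
      execList {Data.a (s - 1), Data.delta t, Data.a j}
          ((List.range n).map (fun i => Op.Fnone (j + 1 + i)))
        = some {Data.a (s - 1), Data.delta t, Data.a (j + n)} ∧
      (∃ p, peakMem c s {Data.a (s - 1), Data.delta t, Data.a j}
          ((List.range n).map (fun i => Op.Fnone (j + 1 + i))) = some p ∧ p ≤ m) ∧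
      (∀ P, Data.a j ∉ P → persistAux (some P) {Data.a (s - 1), Data.delta t, Data.a j}
          ((List.range n).map (fun i => Op.Fnone (j + 1 + i)))) ∧
      schedTime c ((List.range n).map (fun i => Op.Fnone (j + 1 + i)))
        = ∑ i ∈ Finset.range n, c.uf (j + 1 + i) := by
  intro n
  induction n with
  | zero =>
      intro j hj hm
      refine ⟨by simp, by simp [execList], ⟨0, by simp [peakMem], by omega⟩,
        fun P hP => by simp [persistAux], by simp [schedTime]⟩
  | succ n ih =>
      intro j hj hm
      have hlist : (List.range (n + 1)).map (fun i => Op.Fnone (j + 1 + i))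
          = Op.Fnone (j + 1) :: (List.range n).map (fun i => Op.Fnone (j + 1 + 1 + i)) := by
        rw [List.range_succ_eq_map, List.map_cons, List.map_map]
        simp only [Nat.add_zero]
        congr 1
        apply List.map_congr_left
        intro i _
        simp only [Function.comp_apply]
        congr 1
        omega
      have hexec1 : (Op.Fnone (j + 1)).exec {Data.a (s - 1), Data.delta t, Data.a j}
          = some {Data.a (s - 1), Data.delta t, Data.a (j + 1)} := by
        simp only [Op.exec]
        rw [if_pos (by simp [Nat.add_sub_cancel])]
        congr 1
        have h1 : j + 1 - 1 = j := by omega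
        rw [h1]
        ext x
        simp only [Finset.mem_insert, Finset.mem_erase, Finset.mem_singleton, ne_eq]
        constructor
        · rintro (h | ⟨hne, (h | h | h)⟩) <;> first | tauto | (exact absurd h hne)
        · rintro (rfl | rfl | rfl)
          · exact Or.inr ⟨by simp only [ne_eq, Data.a.injEq]; omega, Or.inl rfl⟩
          · exact Or.inr ⟨by simp, Or.inr (Or.inl rfl)⟩
          · exact Or.inl rfl
      obtain ⟨ihst, ihex, ⟨p, ihpk, ihple⟩, ihper, ihtime⟩ :=
        ih (j + 1) (by omega) (fun i h1 h2 => hm i (by omega) (by omega))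
      have hstep : j + 1 + n = j + (n + 1) := by omega
      rw [hstep] at ihex
      have husage : opUsage c s {Data.a (s - 1), Data.delta t, Data.a j}
          {Data.a (s - 1), Data.delta t, Data.a (j + 1)} (Op.Fnone (j + 1)) ≤ m := by
        simp only [opUsage]
        have hun : ({Data.a (s - 1), Data.delta t, Data.a j} : Finset Data)
            ∪ {Data.a (s - 1), Data.delta t, Data.a (j + 1)}
            = insert (Data.a (j + 1)) {Data.a (s - 1), Data.delta t, Data.a j} := by
          ext x
          simp only [Finset.mem_union, Finset.mem_insert, Finset.mem_singleton]
          tauto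
        rw [hun, memSize_insert c s (by simp only [ne_eq, Data.a.injEq]; omega)
          (by simp only [Finset.mem_insert, Finset.mem_singleton, Data.a.injEq]
              push_neg
              refine ⟨by omega, by simp, by omega⟩),
          memSize_triple c t (by omega)]
        have := hm (j + 1) (by omega) (by omega)
        simp only [Data.size, Nat.add_sub_cancel] at *
        omega
      refine ⟨?_, ?_, ?_, ?_, ?_⟩
      · rw [hlist]
        intro op hop
        rw [List.mem_cons] at hop
        rcases hop with hop | hop
        · subst hop; simp only [Op.stage]; omega
        · have := ihst op hop
          simp only [Op.stage] at this ⊢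
          omega
      · rw [hlist]
        simp only [execList, hexec1, Option.bind_some]
        exact ihex
      · rw [hlist]
        refine ⟨max (opUsage c s {Data.a (s - 1), Data.delta t, Data.a j}
          {Data.a (s - 1), Data.delta t, Data.a (j + 1)} (Op.Fnone (j + 1))) p, ?_, ?_⟩
        · simp only [peakMem, hexec1, Option.bind_some, ihpk, Option.map_some]
        · omega
      · rw [hlist]
        intro P hP
        refine ⟨?_, ?_⟩
        · intro ℓ hℓ
          injection hℓ with hℓ
          refine ⟨P, rfl, ?_⟩
          have h1 : ℓ - 1 = j := by omega
          rw [h1]; exact hP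
        · intro M' hM'
          rw [hexec1] at hM'
          injection hM' with hM'
          subst hM'
          apply ihper
          simp only [Finset.mem_insert, Finset.mem_singleton, Data.a.injEq]
          push_neg
          refine ⟨by omega, by simp, by omega⟩
      · rw [hlist]
        simp only [schedTime, List.map_cons, List.sum_cons, List.map_map]
        rw [Finset.sum_range_succ']
        have h1 : ∑ i ∈ Finset.range n, c.uf (j + 1 + (i + 1))
            = ∑ i ∈ Finset.range n, c.uf (j + 1 + 1 + i) := by
          apply Finset.sum_congr rfl
          intro i _
          congr 1
          omega
        have h2 : schedTime c ((List.range n).map (fun i => Op.Fnone (j + 1 + 1 + i)))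
            = ∑ i ∈ Finset.range n, c.uf (j + 1 + 1 + i) := ihtime
        simp only [schedTime, List.map_map] at h2
        rw [h1, ← h2]
        simp [Function.comp, Op.duration]
        omega

/-! ### The base schedule `[Fall s, B s]` and the final backward step -/

lemma execB_final {s : ℕ} (hs : 1 ≤ s) {M : Finset Data}
    (hM : M = insert (Data.abar s) (insert (Data.a (s - 1)) {Data.delta s})) :
    (Op.B s).exec M = some {Data.delta (s - 1)} := by
  subst hM
  simp only [Op.exec]
  rw [if_pos ⟨by simp, by simp, Or.inl (by simp)⟩,
    if_neg (by
      simp only [Finset.mem_insert, Finset.mem_singleton, Data.abar.injEq]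
      push_neg
      exact ⟨by omega, by simp, by simp⟩)]
  congr 1
  ext x
  simp only [Finset.mem_insert, Finset.mem_erase, Finset.mem_singleton, ne_eq]
  constructor
  · rintro (h | ⟨h1, h2, h3, (h | h | h)⟩) <;> tauto
  · rintro rfl; exact Or.inl rfl

lemma memSize_BsMem (c : Chain) {s : ℕ} (hs : 1 ≤ s) :
    memSize c s (insert (Data.abar s) (insert (Data.a (s - 1)) {Data.delta s}))
      = c.wbar s + c.wdelta s := by
  rw [memSize_insert c s (by simp)
    (by simp only [Finset.mem_insert, Finset.mem_singleton]; push_neg; exact ⟨by simp, by simp⟩),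
    memSize_insert_input]
  have : memSize c s ({Data.delta s} : Finset Data) = c.wdelta s := by
    unfold memSize
    rw [Finset.erase_eq_of_notMem (by simp)]
    simp [Data.size]
  rw [this]
  simp [Data.size]

lemma exec_Fall_start (s t : ℕ) :
    (Op.Fall s).exec (startMem s t) = some (insert (Data.abar s) (startMem s t)) := by
  simp only [Op.exec]
  rw [if_pos (Or.inl (by simp [startMem]))]

lemma memSize_Fall_start (c : Chain) (s t : ℕ) :
    memSize c s (insert (Data.abar s) (startMem s t)) = c.wbar s + c.wdelta t := by
  rw [show startMem s t = insert (Data.a (s-1)) {Data.delta t} from rfl,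
    memSize_insert c s (by simp)
      (by simp only [Finset.mem_insert, Finset.mem_singleton]; push_neg; exact ⟨by simp, by simp⟩),
    memSize_insert_input]
  have : memSize c s ({Data.delta t} : Finset Data) = c.wdelta t := by
    unfold memSize
    rw [Finset.erase_eq_of_notMem (by simp)]
    simp [Data.size]
  rw [this]
  simp [Data.size]

lemma base_case (c : Chain) {s m : ℕ} (hs : 1 ≤ s) (hm : mAll c s s ≤ m) :
    ∃ S : List Op,
      (∀ op ∈ S, s ≤ op.stage ∧ op.stage ≤ s) ∧
      Op.Fnone s ∉ S ∧
      execList (startMem s s) S = some {Data.delta (s - 1)} ∧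
      (∃ p, peakMem c s (startMem s s) S = some p ∧ p ≤ m) ∧
      (∀ q, persistAux q (startMem s s) S) ∧
      schedTime c S = c.uf s + c.ub s := by
  obtain ⟨hm1, hm2⟩ := max_le_iff.mp hm
  refine ⟨[Op.Fall s, Op.B s], ?_, ?_, ?_, ?_, ?_, ?_⟩
  · intro op hop
    rcases List.mem_cons.mp hop with rfl | hop
    · simp [Op.stage]
    · rcases List.mem_cons.mp hop with rfl | hop
      · simp [Op.stage]
      · simp at hop
  · intro h
    rcases List.mem_cons.mp h with h | h
    · simp at h
    · rcases List.mem_cons.mp h with h | h <;> simp at h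
  · simp only [execList, exec_Fall_start, Option.bind_some]
    rw [execB_final (M := insert (Data.abar s) (startMem s s)) hs rfl]
    simp [execList]
  · refine ⟨max (opUsage c s (startMem s s) (insert (Data.abar s) (startMem s s)) (Op.Fall s))
      (max (opUsage c s (insert (Data.abar s) (startMem s s)) {Data.delta (s-1)} (Op.B s)) 0),
      ?_, ?_⟩
    · simp only [peakMem, exec_Fall_start, Option.bind_some]
      rw [execB_final (M := insert (Data.abar s) (startMem s s)) hs rfl]
      simp [peakMem]
    · have h1 : opUsage c s (startMem s s) (insert (Data.abar s) (startMem s s)) (Op.Fall s)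
          ≤ m := by
        simp only [opUsage]
        rw [Finset.union_insert, Finset.union_self, memSize_Fall_start]
        omega
      have h2 : opUsage c s (insert (Data.abar s) (startMem s s)) {Data.delta (s-1)} (Op.B s)
          ≤ m := by
        simp only [opUsage]
        rw [show insert (Data.abar s) (startMem s s)
            = insert (Data.abar s) (insert (Data.a (s-1)) {Data.delta s}) from rfl,
          memSize_BsMem c hs]
        omega
      omega
  · intro q
    refine ⟨fun ℓ h => absurd h (by simp), fun M' hM' => ?_⟩
    refine ⟨fun ℓ h => absurd h (by simp), fun M'' hM'' => trivial⟩
  · simp [schedTime, Op.duration]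

/-! ### Main realizability lemma -/

set_option maxHeartbeats 2000000 in
lemma Copt_realizable (c : Chain) :
    ∀ n s t m, t - s ≤ n → 1 ≤ s → s ≤ t → Copt c s t m < ⊤ →
      ∃ S : List Op,
        (∀ op ∈ S, s ≤ op.stage ∧ op.stage ≤ t) ∧
        Op.Fnone s ∉ S ∧
        execList (startMem s t) S = some {Data.delta (s - 1)} ∧
        (∃ p, peakMem c s (startMem s t) S = some p ∧ p ≤ m) ∧
        (∀ q, persistAux q (startMem s t) S) ∧
        (schedTime c S : ℕ∞) = Copt c s t m := by
  intro n
  induction n with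
  | zero =>
      intro s t m hn hs hst hfin
      have ht : t = s := by omega
      subst ht
      by_cases hm : mAll c t t ≤ m
      · obtain ⟨S, h1, h2, h3, h4, h5, h6⟩ := base_case c hs hm
        exact ⟨S, h1, h2, h3, h4, h5, by rw [h6, Copt, dif_pos (le_refl t), if_pos hm]⟩
      · rw [Copt, dif_pos (le_refl t), if_neg hm] at hfin
        exact absurd hfin (lt_irrefl ⊤)
  | succ n ih =>
      intro s t m hn hs hst hfin
      by_cases hts : t ≤ s
      · have ht : t = s := by omega
        subst ht
        by_cases hm : mAll c t t ≤ m
        · obtain ⟨S, h1, h2, h3, h4, h5, h6⟩ := base_case c hs hm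
          exact ⟨S, h1, h2, h3, h4, h5, by rw [h6, Copt, dif_pos (le_refl t), if_pos hm]⟩
        · rw [Copt, dif_pos (le_refl t), if_neg hm] at hfin
          exact absurd hfin (lt_irrefl ⊤)
      · set C1 : ℕ∞ := (if mNone c s t ≤ m then
            (Finset.Icc (s + 1) t).attach.inf fun s' =>
              ((∑ k ∈ Finset.Ico s s'.1, c.uf k : ℕ) : ℕ∞)
                + Copt c s'.1 t (m - c.wa (s'.1 - 1)) + Copt c s (s'.1 - 1) m
          else ⊤) with hC1def
        set C2 : ℕ∞ := (if mAll c s t ≤ m then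
            ((c.uf s : ℕ) : ℕ∞) + Copt c (s + 1) t (m - c.wbar s) + ((c.ub s : ℕ) : ℕ∞)
          else ⊤) with hC2def
        have hunfold : Copt c s t m = min C1 C2 := by
          rw [Copt, dif_neg hts]
        rw [hunfold] at hfin ⊢
        by_cases hC : C1 ≤ C2
        · -- the checkpointing branch C1
          rw [min_eq_left hC] at hfin ⊢
          have hmN : mNone c s t ≤ m := by
            by_contra h
            rw [hC1def, if_neg h] at hfin
            exact absurd hfin (lt_irrefl ⊤)
          have hne : ((Finset.Icc (s + 1) t).attach).Nonempty :=
            Finset.attach_nonempty_iff.mpr (Finset.nonempty_Icc.mpr (by omega))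
          obtain ⟨s', -, hinf⟩ := Finset.exists_mem_eq_inf _ hne
            (fun s' : {x // x ∈ Finset.Icc (s + 1) t} =>
              ((∑ k ∈ Finset.Ico s s'.1, c.uf k : ℕ) : ℕ∞)
                + Copt c s'.1 t (m - c.wa (s'.1 - 1)) + Copt c s (s'.1 - 1) m)
          have hs'2 : s + 1 ≤ s'.1 ∧ s'.1 ≤ t := Finset.mem_Icc.mp s'.2
          have hC1val : C1 = ((∑ k ∈ Finset.Ico s s'.1, c.uf k : ℕ) : ℕ∞)
              + Copt c s'.1 t (m - c.wa (s'.1 - 1)) + Copt c s (s'.1 - 1) m := by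
            rw [hC1def, if_pos hmN, hinf]
          rw [hC1val] at hfin
          have h3top := WithTop.add_lt_top.mp hfin
          have hRtop : Copt c s'.1 t (m - c.wa (s'.1 - 1)) < ⊤ :=
            (WithTop.add_lt_top.mp h3top.1).2
          have hLtop : Copt c s (s'.1 - 1) m < ⊤ := h3top.2
          obtain ⟨SR, hRst, hRfn, hRex, ⟨pR, hRpk, hRple⟩, hRper, hRtime⟩ :=
            ih s'.1 t (m - c.wa (s'.1 - 1)) (by omega) (by omega) (by omega) hRtop
          obtain ⟨SL, hLst, hLfn, hLex, ⟨pL, hLpk, hLple⟩, hLper, hLtime⟩ :=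
            ih s (s'.1 - 1) m (by omega) hs (by omega) hLtop
          have hmN1 : c.wdelta t + c.wa s + c.of s ≤ m := le_trans (le_max_left _ _) hmN
          have hmN2 : ∀ i, s + 1 ≤ i → i ≤ t - 1 →
              c.wdelta t + c.wa (i - 1) + c.wa i + c.of i ≤ m := by
            intro i h1 h2
            exact le_trans
              (Finset.le_sup (f := fun j => c.wdelta t + c.wa (j - 1) + c.wa j + c.of j)
                (Finset.mem_Icc.mpr ⟨h1, h2⟩))
              (le_trans (le_max_right _ _) hmN)
          have hwa : c.wa (s'.1 - 1) ≤ m := by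
            rcases Nat.eq_or_lt_of_le hs'2.1 with h | h
            · have h1 : s'.1 - 1 = s := by omega
              rw [h1]; omega
            · have := hmN2 (s'.1 - 1) (by omega) (by omega)
              omega
          set n0 := s'.1 - 1 - s with hn0
          obtain ⟨hCst, hCex, ⟨pC, hCpk, hCple⟩, hCper, hCtime⟩ :=
            fnone_chain c (t := t) (m := m) hs n0 s (le_refl s)
              (fun i h1 h2 => hmN2 i h1 (by omega))
          have hsn0 : s + n0 = s'.1 - 1 := by omega
          rw [hsn0] at hCex
          obtain ⟨hAex, ⟨pR', hApk, hAple⟩, hAper⟩ :=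
            simA c s'.1 hs SR (startMem s'.1 t) {Data.delta (s'.1 - 1)} pR
              (fun op hop => by have := hRst op hop; omega) hRex hRpk
          have hmemeq : insert (Data.a (s - 1)) (startMem s'.1 t)
              = {Data.a (s - 1), Data.delta t, Data.a (s'.1 - 1)} := by
            ext x
            simp only [startMem, Finset.mem_insert, Finset.mem_singleton]
            tauto
          rw [hmemeq] at hAex hApk
          have hAper' : ∀ q', persistAux q' {Data.a (s - 1), Data.delta t, Data.a (s'.1 - 1)}
              SR := by
            intro q'
            rw [← hmemeq]
            exact hAper none q' (hRper none) (Or.inl rfl)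
          have hAexfin : insert (Data.a (s - 1)) ({Data.delta (s'.1 - 1)} : Finset Data)
              = startMem s (s'.1 - 1) := rfl
          rw [hAexfin] at hAex
          have hFck : (Op.Fck s).exec (startMem s t)
              = some {Data.a (s - 1), Data.delta t, Data.a s} := by
            simp only [Op.exec]
            rw [if_pos (Or.inl (by simp [startMem]))]
            congr 1
            ext x
            simp only [startMem, Finset.mem_insert, Finset.mem_singleton]
            tauto
          have huFck : opUsage c s (startMem s t) {Data.a (s - 1), Data.delta t, Data.a s}
              (Op.Fck s) ≤ m := by
            simp only [opUsage]
            have hun : startMem s t ∪ {Data.a (s - 1), Data.delta t, Data.a s}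
                = {Data.a (s - 1), Data.delta t, Data.a s} := by
              ext x
              simp only [startMem, Finset.mem_union, Finset.mem_insert, Finset.mem_singleton]
              tauto
            rw [hun, memSize_triple c t (by omega)]
            omega
          refine ⟨Op.Fck s :: (((List.range n0).map (fun i => Op.Fnone (s + 1 + i)))
            ++ (SR ++ SL)), ?_, ?_, ?_, ?_, ?_, ?_⟩
          · intro op hop
            rcases List.mem_cons.mp hop with rfl | hop
            · simp only [Op.stage]; omega
            · rcases List.mem_append.mp hop with hop | hop
              · have := hCst op hop
                omega
              · rcases List.mem_append.mp hop with hop | hop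
                · have := hRst op hop; omega
                · have := hLst op hop; omega
          · intro h
            rcases List.mem_cons.mp h with h | h
            · simp at h
            · rcases List.mem_append.mp h with h | h
              · have := (hCst _ h).1
                simp only [Op.stage] at this
                omega
              · rcases List.mem_append.mp h with h | h
                · have := (hRst _ h).1
                  simp only [Op.stage] at this
                  omega
                · exact hLfn h
          · simp only [execList, hFck, Option.bind_some]
            rw [execList_append, hCex, Option.bind_some, execList_append, hAex,
              Option.bind_some]
            exact hLex
          · have hrest := peakMem_append hCex hCpk (peakMem_append hAex hApk hLpk)
            refine ⟨max (opUsage c s (startMem s t) {Data.a (s - 1), Data.delta t, Data.a s}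
              (Op.Fck s)) (max pC (max pR' pL)), ?_, ?_⟩
            · simp only [peakMem, hFck, Option.bind_some]
              rw [hrest, Option.map_some]
            · omega
          · intro q
            refine ⟨fun ℓ h => absurd h (by simp), fun M1 hM1 => ?_⟩
            rw [hFck] at hM1
            injection hM1 with hM1
            subst hM1
            apply persistAux_append hCex
              (hCper (startMem s t) (by
                simp only [startMem, Finset.mem_insert, Finset.mem_singleton, Data.a.injEq]
                push_neg
                exact ⟨by omega, by simp⟩))
            intro q'
            exact persistAux_append hAex (hAper' q') hLper
          · rw [hC1val, ← hRtime, ← hLtime]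
            have hIco : ∑ k ∈ Finset.Ico s s'.1, c.uf k
                = c.uf s + ∑ i ∈ Finset.range n0, c.uf (s + 1 + i) := by
              rw [Finset.sum_Ico_eq_sum_range]
              have hlen : s'.1 - s = n0 + 1 := by omega
              rw [hlen, Finset.sum_range_succ']
              rw [Finset.sum_congr rfl (fun i _ => by congr 1; omega :
                ∀ i ∈ Finset.range n0, c.uf (s + (i + 1)) = c.uf (s + 1 + i))]
              simp only [Nat.add_zero]
              omega
            have htime : schedTime c (Op.Fck s ::
                (((List.range n0).map (fun i => Op.Fnone (s + 1 + i))) ++ (SR ++ SL)))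
                = (∑ k ∈ Finset.Ico s s'.1, c.uf k) + schedTime c SR + schedTime c SL := by
              simp only [schedTime, List.map_cons, List.sum_cons, List.map_append,
                List.sum_append, Op.duration]
              have := hCtime
              simp only [schedTime] at this
              rw [this, hIco]
              omega
            rw [htime]
            push_cast
            ring
        · -- the recompute-all branch C2
          have hC2le : C2 ≤ C1 := le_of_not_ge hC
          rw [min_eq_right hC2le] at hfin ⊢
          have hmA : mAll c s t ≤ m := by
            by_contra h
            rw [hC2def, if_neg h] at hfin
            exact absurd hfin (lt_irrefl ⊤)
          obtain ⟨hmA1, hmA2⟩ := max_le_iff.mp hmA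
          have hC2val : C2 = ((c.uf s : ℕ) : ℕ∞) + Copt c (s + 1) t (m - c.wbar s)
              + ((c.ub s : ℕ) : ℕ∞) := by rw [hC2def, if_pos hmA]
          rw [hC2val] at hfin
          have hBtop : Copt c (s + 1) t (m - c.wbar s) < ⊤ :=
            (WithTop.add_lt_top.mp (WithTop.add_lt_top.mp hfin).1).2
          obtain ⟨SB, hBst, hBfn, hBex, ⟨pB, hBpk, hBple⟩, hBper, hBtime⟩ :=
            ih (s + 1) t (m - c.wbar s) (by omega) (by omega) (by omega) hBtop
          have habarstart : Data.abar s ∉ startMem (s + 1) t := by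
            simp [startMem]
          obtain ⟨hSex, ⟨pB', hSpk, hSple⟩, hSper⟩ :=
            simB c hs SB (startMem (s + 1) t) {Data.delta (s + 1 - 1)} pB
              (fun op hop => (hBst op hop).1) hBfn habarstart hBex hBpk
          have hTb1 : Tb s (startMem (s + 1) t) = insert (Data.abar s) (startMem s t) := by
            ext x
            simp only [mem_Tb, startMem, Finset.mem_insert, Finset.mem_singleton,
              Nat.add_sub_cancel, ne_eq]
            constructor
            · rintro (rfl | rfl | ⟨(rfl | rfl), h⟩) <;> tauto
            · rintro (rfl | rfl | rfl)
              · tauto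
              · tauto
              · exact Or.inr (Or.inr ⟨Or.inr rfl, by simp⟩)
          have hdel : (s + 1 - 1) = s := by omega
          rw [hdel] at hSex
          have hTb2 : Tb s ({Data.delta s} : Finset Data)
              = insert (Data.abar s) (insert (Data.a (s - 1)) {Data.delta s}) := by
            rw [Tb, Finset.erase_eq_of_notMem (by simp)]
          rw [hTb1, hTb2] at hSex
          rw [hTb1] at hSpk
          have hSper' : ∀ q', persistAux q' (insert (Data.abar s) (startMem s t)) SB := by
            intro q'
            rw [← hTb1]
            exact hSper none q' (hBper none) (Or.inl rfl)
          have hBsexec : (Op.B s).exec (insert (Data.abar s) (insert (Data.a (s - 1))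
              {Data.delta s})) = some {Data.delta (s - 1)} := execB_final hs rfl
          have hBspk : peakMem c s (insert (Data.abar s) (insert (Data.a (s - 1))
              {Data.delta s})) [Op.B s]
              = some (max (opUsage c s (insert (Data.abar s) (insert (Data.a (s - 1))
                  {Data.delta s})) {Data.delta (s - 1)} (Op.B s)) 0) := by
            simp only [peakMem, hBsexec, Option.bind_some, Option.map_some]
          have hBsusage : opUsage c s (insert (Data.abar s) (insert (Data.a (s - 1))
              {Data.delta s})) {Data.delta (s - 1)} (Op.B s) ≤ m := by
            simp only [opUsage]
            rw [memSize_BsMem c hs]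
            omega
          have huFall : opUsage c s (startMem s t) (insert (Data.abar s) (startMem s t))
              (Op.Fall s) ≤ m := by
            simp only [opUsage]
            rw [Finset.union_insert, Finset.union_self, memSize_Fall_start]
            omega
          refine ⟨Op.Fall s :: (SB ++ [Op.B s]), ?_, ?_, ?_, ?_, ?_, ?_⟩
          · intro op hop
            rcases List.mem_cons.mp hop with rfl | hop
            · simp only [Op.stage]; omega
            · rcases List.mem_append.mp hop with hop | hop
              · have := hBst op hop; omega
              · rcases List.mem_cons.mp hop with rfl | hop
                · simp only [Op.stage]; omega
                · simp at hop
          · intro h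
            rcases List.mem_cons.mp h with h | h
            · simp at h
            · rcases List.mem_append.mp h with h | h
              · have := (hBst _ h).1
                simp only [Op.stage] at this
                omega
              · rcases List.mem_cons.mp h with h | h <;> simp at h
          · simp only [execList, exec_Fall_start, Option.bind_some]
            rw [execList_append, hSex, Option.bind_some]
            simp only [execList, hBsexec, Option.bind_some]
          · have hrest := peakMem_append hSex hSpk hBspk
            refine ⟨max (opUsage c s (startMem s t) (insert (Data.abar s) (startMem s t))
              (Op.Fall s)) (max pB' (max (opUsage c s (insert (Data.abar s)
                (insert (Data.a (s - 1)) {Data.delta s})) {Data.delta (s - 1)} (Op.B s)) 0)),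
              ?_, ?_⟩
            · simp only [peakMem, exec_Fall_start, Option.bind_some]
              rw [hrest, Option.map_some]
            · have hwbar : c.wbar s ≤ m := by omega
              omega
          · intro q
            refine ⟨fun ℓ h => absurd h (by simp), fun M1 hM1 => ?_⟩
            rw [exec_Fall_start] at hM1
            injection hM1 with hM1
            subst hM1
            apply persistAux_append hSex (hSper' (some (startMem s t)))
            intro q'
            exact ⟨fun ℓ h => absurd h (by simp), fun M'' h'' => trivial⟩
          · rw [hC2val, ← hBtime]
            have htime : schedTime c (Op.Fall s :: (SB ++ [Op.B s]))
                = c.uf s + schedTime c SB + c.ub s := by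
              simp only [schedTime, List.map_cons, List.sum_cons, List.map_append,
                List.sum_append, Op.duration, List.map_nil, List.sum_nil]
              omega
            rw [htime]
            push_cast
            ring

end Checkpoint

namespace Checkpoint

/-- For all `1 ≤ s ≤ t ≤ L+1` and every memory bound `m` such
that `C_opt(s,t,m) < ∞`, there exists a valid memory-persistent schedule for
the subchain from `s` to `t` whose peak memory is at most `m` and whose
computation time equals `C_opt(s,t,m)`. -/
theorem exists_schedule_of_Copt_lt_top (c : Chain) (s t m : ℕ)
    (h1 : 1 ≤ s) (h2 : s ≤ t) (h3 : t ≤ c.L + 1)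
    (hfin : Copt c s t m < ⊤) :
    ∃ S : List Op, Valid s t S ∧ Persistent s t S ∧ PeakLE c s t m S ∧
      (schedTime c S : ℕ∞) = Copt c s t m := by
  obtain ⟨S, hst, hfn, hex, ⟨p, hpk, hple⟩, hper, htime⟩ :=
    Copt_realizable c (t - s) s t m (le_refl _) h1 h2 hfin
  exact ⟨S, ⟨hst, {Data.delta (s - 1)}, hex, by simp⟩, hper none, ⟨p, hpk, hple⟩, htime⟩

end Checkpoint
end

section
/- In any valid schedule for the subchain from s to t, for every stage j with s ≤ j ≤ t at least one forward operation at stage j (F_all^j, F_ck^j or F_ø^j) is executed strictly before the (first) execution of B^t; moreover δ^t is present in memory during every operation executed before B^t. -/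
namespace Checkpoint

/-- Specification of `memTrace`. -/
lemma memTrace_spec : ∀ (S : List Op) (M : Finset Data) (tr : List (Finset Data)),
    memTrace M S = some tr →
    tr.length = S.length + 1 ∧
    (∀ h0 : 0 < tr.length, tr[0] = M) ∧
    ∀ k (hk : k < S.length) (hk1 : k < tr.length) (hk2 : k + 1 < tr.length),
      (S[k]).exec tr[k] = some tr[k + 1]
  | [], M, tr, h => by
      simp only [memTrace, Option.some.injEq] at h
      subst h
      refine ⟨rfl, by simp, by simp⟩
  | op :: ops, M, tr, h => by
      simp only [memTrace, Option.bind_eq_some_iff, Option.map_eq_some_iff] at h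
      obtain ⟨M', hM', tr', htr', rfl⟩ := h
      obtain ⟨hlen, h0, hstep⟩ := memTrace_spec ops M' tr' htr'
      refine ⟨by simp [hlen], by simp, ?_⟩
      intro k hk hk1 hk2
      cases k with
      | zero =>
          have h0' : tr'[0] = M' := h0 (by omega)
          simpa [h0'] using hM'
      | succ k =>
          simpa using hstep k (by simpa using hk) (by simpa using hk1)
            (by simpa using hk2)

/-- Any operation other than `B t` preserves the presence of `delta t`. -/
lemma delta_preserved {op : Op} {M M' : Finset Data} {t : ℕ}
    (hex : op.exec M = some M') (hne : op ≠ Op.B t)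
    (hmem : Data.delta t ∈ M) : Data.delta t ∈ M' := by
  cases op with
  | Fall ℓ =>
      simp only [Op.exec] at hex
      split at hex
      · cases hex; simp [Finset.mem_insert, hmem]
      · exact absurd hex (by simp)
  | Fck ℓ =>
      simp only [Op.exec] at hex
      split at hex
      · cases hex; simp [Finset.mem_insert, hmem]
      · exact absurd hex (by simp)
  | Fnone ℓ =>
      simp only [Op.exec] at hex
      split at hex
      · cases hex; simp [Finset.mem_insert, Finset.mem_erase, hmem]
      · exact absurd hex (by simp)
  | B ℓ =>
      have hlt : ℓ ≠ t := fun h => hne (by rw [h])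
      simp only [Op.exec] at hex
      split at hex
      · cases hex
        split <;> simp [Finset.mem_insert, Finset.mem_erase, hmem] <;> omega
      · exact absurd hex (by simp)

/-- If `a j` or `abar j` appears after an operation, either it was already
present or the operation is a forward operation at stage `j`. -/
lemma exec_new_data {op : Op} {M M' : Finset Data} {j : ℕ}
    (hex : op.exec M = some M')
    (hmem : Data.a j ∈ M' ∨ Data.abar j ∈ M') :
    (Data.a j ∈ M ∨ Data.abar j ∈ M) ∨
      (op = Op.Fall j ∨ op = Op.Fck j ∨ op = Op.Fnone j) := by
  cases op with
  | Fall ℓ =>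
      simp only [Op.exec] at hex
      split at hex
      · cases hex
        rcases hmem with hmem | hmem <;>
          simp only [Finset.mem_insert] at hmem
        · rcases hmem with h | h
          · exact absurd h (by simp)
          · exact Or.inl (Or.inl h)
        · rcases hmem with h | h
          · cases h; exact Or.inr (Or.inl rfl)
          · exact Or.inl (Or.inr h)
      · exact absurd hex (by simp)
  | Fck ℓ =>
      simp only [Op.exec] at hex
      split at hex
      · cases hex
        rcases hmem with hmem | hmem <;>
          simp only [Finset.mem_insert] at hmem
        · rcases hmem with h | h
          · cases h; exact Or.inr (Or.inr (Or.inl rfl))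
          · exact Or.inl (Or.inl h)
        · rcases hmem with h | h
          · exact absurd h (by simp)
          · exact Or.inl (Or.inr h)
      · exact absurd hex (by simp)
  | Fnone ℓ =>
      simp only [Op.exec] at hex
      split at hex
      · cases hex
        rcases hmem with hmem | hmem <;>
          simp only [Finset.mem_insert, Finset.mem_erase] at hmem
        · rcases hmem with h | h
          · cases h; exact Or.inr (Or.inr (Or.inr rfl))
          · exact Or.inl (Or.inl h.2)
        · rcases hmem with h | h
          · exact absurd h (by simp)
          · exact Or.inl (Or.inr h.2)
      · exact absurd hex (by simp)
  | B ℓ =>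
      simp only [Op.exec] at hex
      split at hex
      · cases hex
        left
        have hsub : ∀ d, d ∈ (if Data.abar (ℓ - 1) ∈ M then
              (M.erase (Data.delta ℓ)).erase (Data.abar ℓ)
            else ((M.erase (Data.delta ℓ)).erase (Data.abar ℓ)).erase
              (Data.a (ℓ - 1))) → d ∈ M := by
          intro d hd
          split at hd <;> simp only [Finset.mem_erase] at hd <;> tauto
        rcases hmem with hmem | hmem <;>
          rcases Finset.mem_insert.mp hmem with h | h <;>
          first
            | exact absurd h (by simp)
            | exact Or.inl (hsub _ h)
            | exact Or.inr (hsub _ h)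
      · exact absurd hex (by simp)

/-- A forward operation at stage `j` requires `a (j-1)` or `abar (j-1)`. -/
lemma forward_input {op : Op} {M M' : Finset Data} {j : ℕ}
    (hf : op = Op.Fall j ∨ op = Op.Fck j ∨ op = Op.Fnone j)
    (hex : op.exec M = some M') :
    Data.a (j - 1) ∈ M ∨ Data.abar (j - 1) ∈ M := by
  rcases hf with rfl | rfl | rfl <;>
    · simp only [Op.exec] at hex
      split at hex
      · first | assumption | exact Or.inl (by assumption)
      · exact absurd hex (by simp)

/-- In any valid schedule for the subchain from `s` to `t`,
for every stage `j` with `s ≤ j ≤ t` at least one forward operation at stage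
`j` (`F_all j`, `F_ck j` or `F_ø j`) is executed strictly before the first
execution of `B t`; moreover `delta t` is present in memory during every
operation executed before `B t`. -/
theorem forward_before_first_backward (s t : ℕ) (h1 : 1 ≤ s) (h2 : s ≤ t)
    (S : List Op) (hS : Valid s t S)
    (tr : List (Finset Data)) (htr : memTrace (startMem s t) S = some tr)
    (i : ℕ) (hi : i < S.length) (hB : S.get ⟨i, hi⟩ = Op.B t)
    (hfirst : ∀ i' (h' : i' < S.length), i' < i → S.get ⟨i', h'⟩ ≠ Op.B t) :
    (∀ j, s ≤ j → j ≤ t → ∃ i', ∃ h' : i' < S.length, i' < i ∧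
        (S.get ⟨i', h'⟩ = Op.Fall j ∨ S.get ⟨i', h'⟩ = Op.Fck j ∨
          S.get ⟨i', h'⟩ = Op.Fnone j))
    ∧ (∀ i', ∀ h' : i' < tr.length, i' ≤ i → Data.delta t ∈ tr.get ⟨i', h'⟩) := by
  obtain ⟨hstages, Mf, hexec, hMf⟩ := hS
  obtain ⟨hlen, h0, hstep⟩ := memTrace_spec S (startMem s t) tr htr
  have htrlen : tr.length = S.length + 1 := hlen
  have htr0 : tr[0]'(by omega) = startMem s t := h0 (by omega)
  have hB' : S[i] = Op.B t := by simpa [List.get_eq_getElem] using hB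
  -- general lemma: presence of `a j` or `abar j` (with `s ≤ j`) in memory
  -- forces a prior forward operation at stage `j`
  have hfwd : ∀ k, ∀ hk : k < tr.length, ∀ j, s ≤ j →
      (Data.a j ∈ tr[k] ∨ Data.abar j ∈ tr[k]) →
      ∃ i', ∃ h' : i' < S.length, i' < k ∧
        (S[i'] = Op.Fall j ∨ S[i'] = Op.Fck j ∨ S[i'] = Op.Fnone j) := by
    intro k
    induction k with
    | zero =>
        intro hk j hj hmem
        rw [htr0] at hmem
        simp only [startMem, Finset.mem_insert, Finset.mem_singleton] at hmem
        rcases hmem with (h | h) | (h | h)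
        · have hh : j = s - 1 := by injection h
          omega
        · exact absurd h (by simp)
        · exact absurd h (by simp)
        · exact absurd h (by simp)
    | succ n ih =>
        intro hk j hj hmem
        have hnlt : n < S.length := by omega
        have hstep' := hstep n hnlt (by omega) (by omega)
        rcases exec_new_data hstep' hmem with h | h
        · obtain ⟨i', h', hlt, hf⟩ := ih (by omega) j hj h
          exact ⟨i', h', by omega, hf⟩
        · exact ⟨n, hnlt, by omega, h⟩
  -- the execution of `B t` at index `i` needs `abar t` in memory
  have hstepi := hstep i hi (by omega) (by omega)
  rw [hB'] at hstepi
  simp only [Op.exec] at hstepi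
  have habar : Data.abar t ∈ tr[i]'(by omega) := by
    by_cases hc : Data.delta t ∈ tr[i]'(by omega) ∧ Data.abar t ∈ tr[i]'(by omega) ∧
        (Data.a (t - 1) ∈ tr[i]'(by omega) ∨ Data.abar (t - 1) ∈ tr[i]'(by omega))
    · exact hc.2.1
    · rw [if_neg hc] at hstepi
      exact absurd hstepi (by simp)
  constructor
  · -- downward induction from `t` to `j`
    have main : ∀ d j, t - j = d → s ≤ j → j ≤ t →
        ∃ i', ∃ h' : i' < S.length, i' < i ∧
          (S[i'] = Op.Fall j ∨ S[i'] = Op.Fck j ∨ S[i'] = Op.Fnone j) := by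
      intro d
      induction d with
      | zero =>
          intro j hd hj hjt
          have : j = t := by omega
          subst this
          exact hfwd i (by omega) j hj (Or.inr habar)
      | succ n ih =>
          intro j hd hj hjt
          obtain ⟨i', h', hlt, hf⟩ := ih (j + 1) (by omega) (by omega) (by omega)
          have hstep' := hstep i' h' (by omega) (by omega)
          have hin : Data.a j ∈ tr[i']'(by omega) ∨ Data.abar j ∈ tr[i']'(by omega) := by
            have := forward_input hf hstep'
            simpa using this
          obtain ⟨i'', h'', hlt'', hf''⟩ := hfwd i' (by omega) j hj hin
          refine ⟨i'', h'', by omega, ?_⟩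
          simpa [List.get_eq_getElem] using hf''
    intro j hj hjt
    obtain ⟨i', h', hlt, hf⟩ := main (t - j) j rfl hj hjt
    exact ⟨i', h', hlt, by simpa [List.get_eq_getElem] using hf⟩
  · -- `delta t` is present before every operation up to index `i`
    intro i'
    induction i' with
    | zero =>
        intro h' _
        have : tr.get ⟨0, h'⟩ = startMem s t := htr0
        rw [this]
        simp [startMem]
    | succ n ih =>
        intro h' hn
        have hnlt : n < S.length := by omega
        have hne : S[n] ≠ Op.B t := by
          have := hfirst n hnlt (by omega)
          simpa [List.get_eq_getElem] using this
        have hstep' := hstep n hnlt (by omega) (by omega)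
        have hprev : Data.delta t ∈ tr[n]'(by omega) := ih (by omega) (by omega)
        exact delta_preserved hstep' hne hprev

end Checkpoint
end

section
/- Assume that w_ā^ℓ ≥ w_a^ℓ for every stage ℓ. Then every valid schedule for the subchain from s to t (with s < t) has peak memory at least m_∅(s,t) = max( w_δ^t + w_a^s + o_f^s , max_{s+1 ≤ j ≤ t−1} (w_δ^t + w_a^{j−1} + w_a^j + o_f^j) ); that is, a memory of at least m_∅(s,t) is needed just to execute all forward steps from s to t without saving any activation while δ^t is stored. -/
namespace Checkpoint

private lemma le_memSize₂ (c : Chain) (s : ℕ) (A : Finset Data) (x y : Data)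
    (hxy : x ≠ y) (hx : x ∈ A) (hy : y ∈ A)
    (hx' : x ≠ Data.a (s-1)) (hy' : y ≠ Data.a (s-1)) :
    x.size c + y.size c ≤ memSize c s A := by
  have hsub : ({x, y} : Finset Data) ⊆ A.erase (Data.a (s-1)) := by
    intro d hd
    simp only [Finset.mem_insert, Finset.mem_singleton] at hd
    rcases hd with rfl | rfl
    · exact Finset.mem_erase.2 ⟨hx', hx⟩
    · exact Finset.mem_erase.2 ⟨hy', hy⟩
  calc x.size c + y.size c = ∑ d ∈ ({x, y} : Finset Data), d.size c := by
        rw [Finset.sum_pair hxy]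
    _ ≤ _ := Finset.sum_le_sum_of_subset hsub

private lemma le_memSize₃ (c : Chain) (s : ℕ) (A : Finset Data) (x y z : Data)
    (hxy : x ≠ y) (hxz : x ≠ z) (hyz : y ≠ z)
    (hx : x ∈ A) (hy : y ∈ A) (hz : z ∈ A)
    (hx' : x ≠ Data.a (s-1)) (hy' : y ≠ Data.a (s-1)) (hz' : z ≠ Data.a (s-1)) :
    x.size c + y.size c + z.size c ≤ memSize c s A := by
  have hsub : ({x, y, z} : Finset Data) ⊆ A.erase (Data.a (s-1)) := by
    intro d hd
    simp only [Finset.mem_insert, Finset.mem_singleton] at hd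
    rcases hd with rfl | rfl | rfl
    · exact Finset.mem_erase.2 ⟨hx', hx⟩
    · exact Finset.mem_erase.2 ⟨hy', hy⟩
    · exact Finset.mem_erase.2 ⟨hz', hz⟩
  calc x.size c + y.size c + z.size c
      = ∑ d ∈ ({x, y, z} : Finset Data), d.size c := by
        rw [Finset.sum_insert (by simp [hxy, hxz]), Finset.sum_pair hyz]; ring
    _ ≤ _ := Finset.sum_le_sum_of_subset hsub

/-- Key inductive step for forward operations. -/
private lemma fwd_aux (c : Chain) (s t : ℕ) (h1 : 1 ≤ s) (h2 : s < t)
    (hw : ∀ ℓ, c.wa ℓ ≤ c.wbar ℓ)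
    (ops : List Op)
    (IH : ∀ (M : Finset Data) (j p : ℕ), s ≤ j → j ≤ t →
      (∀ op ∈ ops, s ≤ op.stage ∧ op.stage ≤ t) →
      (∀ ℓ, Data.delta ℓ ∈ M → ℓ = t) → Data.delta t ∈ M →
      (∀ k, j ≤ k → k ≤ t → Data.a k ∉ M ∧ Data.abar k ∉ M) →
      peakMem c s M ops = some p →
      (∃ Mf, execList M ops = some Mf ∧ Data.delta (s-1) ∈ Mf) →
      ∀ k, j ≤ k → k ≤ t - 1 →
        c.wdelta t + (if k = s then c.wa s else c.wa (k-1) + c.wa k) + c.of k ≤ p)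
    (hstage_ops : ∀ op ∈ ops, s ≤ op.stage ∧ op.stage ≤ t)
    (ℓ : ℕ) (hsℓ : s ≤ ℓ) (hℓt : ℓ ≤ t)
    (M : Finset Data) (j p' : ℕ) (hsj : s ≤ j) (hjt : j ≤ t)
    (hdelta : ∀ ℓ', Data.delta ℓ' ∈ M → ℓ' = t) (hdt : Data.delta t ∈ M)
    (hgood : ∀ k, j ≤ k → k ≤ t → Data.a k ∉ M ∧ Data.abar k ∉ M)
    (out : Data) (hout : out = Data.a ℓ ∨ out = Data.abar ℓ)
    (M' : Finset Data)
    (hM'sub : M' ⊆ insert out M) (houtM' : out ∈ M')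
    (hMsub : ∀ d, d ∈ M → d ≠ Data.a (ℓ-1) → d ∈ M')
    (hin : Data.a (ℓ-1) ∈ M ∨ Data.abar (ℓ-1) ∈ M)
    (hpk : peakMem c s M' ops = some p')
    (hfin : ∃ Mf, execList M' ops = some Mf ∧ Data.delta (s-1) ∈ Mf) :
    ∀ k, j ≤ k → k ≤ t - 1 →
      c.wdelta t + (if k = s then c.wa s else c.wa (k-1) + c.wa k) + c.of k ≤
        max (memSize c s (M ∪ M') + c.of ℓ) p' := by
  -- basic facts about M'
  have hdelta' : ∀ ℓ', Data.delta ℓ' ∈ M' → ℓ' = t := by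
    intro ℓ' hm
    rcases Finset.mem_insert.1 (hM'sub hm) with h | h
    · rcases hout with rfl | rfl
      · exact absurd h (by simp)
      · exact absurd h (by simp)
    · exact hdelta ℓ' h
  have hdt' : Data.delta t ∈ M' := hMsub _ hdt (by simp)
  have hl_le_j : ℓ ≤ j := by
    have hne : ¬ (j ≤ ℓ - 1) := by
      intro hji
      rcases hin with h | h
      · exact (hgood _ hji (by omega)).1 h
      · exact (hgood _ hji (by omega)).2 h
    omega
  rcases lt_or_eq_of_le hl_le_j with hlj | rfl
  · -- ℓ < j : nothing new needed at level ≥ j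
    have hgood' : ∀ k, j ≤ k → k ≤ t → Data.a k ∉ M' ∧ Data.abar k ∉ M' := by
      intro k hk1 hk2
      constructor
      · intro hm
        rcases Finset.mem_insert.1 (hM'sub hm) with h | h
        · rcases hout with rfl | rfl
          · simp only [Data.a.injEq] at h; omega
          · exact absurd h (by simp)
        · exact (hgood k hk1 hk2).1 h
      · intro hm
        rcases Finset.mem_insert.1 (hM'sub hm) with h | h
        · rcases hout with rfl | rfl
          · exact absurd h (by simp)
          · simp only [Data.abar.injEq] at h; omega
        · exact (hgood k hk1 hk2).2 h
    intro k hk1 hk2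
    exact le_trans
      (IH M' j p' hsj hjt hstage_ops hdelta' hdt' hgood' hpk hfin k hk1 hk2)
      (le_max_right _ _)
  · -- ℓ = j : this is the forward filling level j
    intro k hk1 hk2
    rcases eq_or_lt_of_le hk1 with rfl | hkj
    · -- k = ℓ : bound by the usage of this operation
      refine le_trans ?_ (le_max_left _ _)
      have hout_size : c.wa ℓ ≤ out.size c := by
        rcases hout with rfl | rfl
        · simp [Data.size]
        · simpa [Data.size] using hw ℓ
      have hout_ne_a : out ≠ Data.a (s - 1) := by
        rcases hout with rfl | rfl <;> simp <;> omega
      have hout_ne_d : Data.delta t ≠ out := by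
        rcases hout with rfl | rfl <;> simp
      have hout_mem : out ∈ M ∪ M' := Finset.mem_union_right _ houtM'
      have hdt_mem : Data.delta t ∈ M ∪ M' := Finset.mem_union_left _ hdt
      by_cases hks : ℓ = s
      · rw [if_pos hks]
        subst hks
        have hb := le_memSize₂ c ℓ (M ∪ M') (Data.delta t) out hout_ne_d
          hdt_mem hout_mem (by simp) hout_ne_a
        have hds : (Data.delta t).size c = c.wdelta t := rfl
        omega
      · rw [if_neg hks]
        -- an input at level ℓ-1 is in M
        obtain ⟨inp, hinpM, hinps, hinp_ne_a, hinp_ne_d, hinp_ne_out⟩ :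
            ∃ d, d ∈ M ∧ c.wa (ℓ-1) ≤ d.size c ∧ d ≠ Data.a (s-1) ∧
              Data.delta t ≠ d ∧ d ≠ out := by
          rcases hin with h | h
          · refine ⟨Data.a (ℓ-1), h, le_of_eq rfl, ?_, by simp, ?_⟩
            · simp; omega
            · rcases hout with rfl | rfl <;> simp <;> omega
          · refine ⟨Data.abar (ℓ-1), h, hw _, by simp, by simp, ?_⟩
            rcases hout with rfl | rfl <;> simp <;> omega
        have hb := le_memSize₃ c s (M ∪ M') (Data.delta t) inp out
          hinp_ne_d hout_ne_d hinp_ne_out hdt_mem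
          (Finset.mem_union_left _ hinpM) hout_mem (by simp) hinp_ne_a hout_ne_a
        have hds : (Data.delta t).size c = c.wdelta t := rfl
        omega
    · -- k > ℓ : use the IH with j+1
      refine le_trans ?_ (le_max_right _ _)
      have hjt' : ℓ + 1 ≤ t := by omega
      have hgood' : ∀ k', ℓ + 1 ≤ k' → k' ≤ t → Data.a k' ∉ M' ∧ Data.abar k' ∉ M' := by
        intro k' hk1' hk2'
        constructor
        · intro hm
          rcases Finset.mem_insert.1 (hM'sub hm) with h | h
          · rcases hout with rfl | rfl
            · simp only [Data.a.injEq] at h; omega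
            · exact absurd h (by simp)
          · exact (hgood k' (by omega) hk2').1 h
        · intro hm
          rcases Finset.mem_insert.1 (hM'sub hm) with h | h
          · rcases hout with rfl | rfl
            · exact absurd h (by simp)
            · simp only [Data.abar.injEq] at h; omega
          · exact (hgood k' (by omega) hk2').2 h
      exact IH M' (ℓ+1) p' (by omega) hjt' hstage_ops hdelta' hdt' hgood' hpk hfin
        k (by omega) hk2

/-- Core invariant lemma: while the levels `j, …, t` have not been produced
and only `delta t` is present among gradients, the schedule must still perform
all forward steps `j, …, t-1` while `delta t` is in memory. -/
private lemma core (c : Chain) (s t : ℕ) (h1 : 1 ≤ s) (h2 : s < t)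
    (hw : ∀ ℓ, c.wa ℓ ≤ c.wbar ℓ) (S : List Op) :
    ∀ (M : Finset Data) (j p : ℕ), s ≤ j → j ≤ t →
      (∀ op ∈ S, s ≤ op.stage ∧ op.stage ≤ t) →
      (∀ ℓ, Data.delta ℓ ∈ M → ℓ = t) → Data.delta t ∈ M →
      (∀ k, j ≤ k → k ≤ t → Data.a k ∉ M ∧ Data.abar k ∉ M) →
      peakMem c s M S = some p →
      (∃ Mf, execList M S = some Mf ∧ Data.delta (s-1) ∈ Mf) →
      ∀ k, j ≤ k → k ≤ t - 1 →
        c.wdelta t + (if k = s then c.wa s else c.wa (k-1) + c.wa k) + c.of k ≤ p := by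
  induction S with
  | nil =>
    intro M j p hsj hjt hstage hdelta hdt hgood hp hfin k hk1 hk2
    obtain ⟨Mf, hMf, hd⟩ := hfin
    simp only [execList, Option.some.injEq] at hMf
    subst hMf
    have := hdelta (s-1) hd
    omega
  | cons op ops IHops =>
    intro M j p hsj hjt hstage hdelta hdt hgood hp hfin
    have hstage_ops : ∀ o ∈ ops, s ≤ o.stage ∧ o.stage ≤ t := by
      intro o ho; exact hstage o (List.mem_cons_of_mem _ ho)
    have hstage_op := hstage op List.mem_cons_self
    cases hE : op.exec M with
    | none =>
      rw [peakMem, hE] at hp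
      simp at hp
    | some M' =>
      rw [peakMem, hE] at hp
      simp only [Option.bind_some, Option.map_eq_some_iff] at hp
      obtain ⟨p', hpk, hmax⟩ := hp
      subst hmax
      obtain ⟨Mf, hMf, hd⟩ := hfin
      rw [execList, hE] at hMf
      simp only [Option.bind_some] at hMf
      cases op with
      | B ℓ =>
        exfalso
        rw [Op.exec] at hE
        split at hE
        · next hc =>
          obtain ⟨hdl, hbl, -⟩ := hc
          have := hdelta ℓ hdl
          subst this
          exact (hgood ℓ hjt le_rfl).2 hbl
        · exact nomatch hE
      | Fall ℓ =>
        have hst : s ≤ ℓ ∧ ℓ ≤ t := hstage_op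
        rw [Op.exec] at hE
        split at hE
        · next hc =>
          have hM' : M' = insert (Data.abar ℓ) M := by
            exact (Option.some.injEq _ _).mp hE.symm
          subst hM'
          exact fwd_aux c s t h1 h2 hw ops IHops hstage_ops ℓ hst.1 hst.2 M j p'
            hsj hjt hdelta hdt hgood (Data.abar ℓ) (Or.inr rfl) _
            (Finset.Subset.refl _) (Finset.mem_insert_self _ _)
            (fun d hd _ => Finset.mem_insert_of_mem hd) hc hpk ⟨Mf, hMf, hd⟩
        · exact nomatch hE
      | Fck ℓ =>
        have hst : s ≤ ℓ ∧ ℓ ≤ t := hstage_op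
        rw [Op.exec] at hE
        split at hE
        · next hc =>
          have hM' : M' = insert (Data.a ℓ) M := by
            exact (Option.some.injEq _ _).mp hE.symm
          subst hM'
          exact fwd_aux c s t h1 h2 hw ops IHops hstage_ops ℓ hst.1 hst.2 M j p'
            hsj hjt hdelta hdt hgood (Data.a ℓ) (Or.inl rfl) _
            (Finset.Subset.refl _) (Finset.mem_insert_self _ _)
            (fun d hd _ => Finset.mem_insert_of_mem hd) hc hpk ⟨Mf, hMf, hd⟩
        · exact nomatch hE
      | Fnone ℓ =>
        have hst : s ≤ ℓ ∧ ℓ ≤ t := hstage_op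
        rw [Op.exec] at hE
        split at hE
        · next hc =>
          have hM' : M' = insert (Data.a ℓ) (M.erase (Data.a (ℓ-1))) := by
            exact (Option.some.injEq _ _).mp hE.symm
          subst hM'
          refine fwd_aux c s t h1 h2 hw ops IHops hstage_ops ℓ hst.1 hst.2 M j p'
            hsj hjt hdelta hdt hgood (Data.a ℓ) (Or.inl rfl) _
            ?_ (Finset.mem_insert_self _ _) ?_ (Or.inl hc) hpk ⟨Mf, hMf, hd⟩
          · intro d hdm
            rcases Finset.mem_insert.1 hdm with rfl | hdm'
            · exact Finset.mem_insert_self _ _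
            · exact Finset.mem_insert_of_mem (Finset.mem_of_mem_erase hdm')
          · intro d hdm hdne
            exact Finset.mem_insert_of_mem (Finset.mem_erase.2 ⟨hdne, hdm⟩)
        · exact nomatch hE

/-- Assume that `wā ℓ ≥ wa ℓ` for every stage `ℓ`.  Then
every valid schedule for the subchain from `s` to `t` (with `s < t`) has peak
memory at least
`m_∅(s,t) = max (wδ t + wa s + of s)
  (max_{s+1 ≤ j ≤ t-1} (wδ t + wa (j-1) + wa j + of j))`:
a memory of at least `m_∅(s,t)` is needed just to execute all the forward
steps from `s` to `t` without saving any activation while `delta t` is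
stored. -/
theorem peak_ge_mNone (c : Chain) (s t : ℕ)
    (h1 : 1 ≤ s) (h2 : s < t) (h3 : t ≤ c.L + 1)
    (hw : ∀ ℓ, c.wa ℓ ≤ c.wbar ℓ)
    (S : List Op) (hS : Valid s t S)
    (p : ℕ) (hp : peakMem c s (startMem s t) S = some p) :
    mNone c s t ≤ p := by
  obtain ⟨hstage, Mf, hex, hdf⟩ := hS
  have hdelta : ∀ ℓ, Data.delta ℓ ∈ startMem s t → ℓ = t := by
    intro ℓ hm
    simp only [startMem, Finset.mem_insert, Finset.mem_singleton] at hm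
    rcases hm with h | h
    · exact absurd h (by simp)
    · simpa using h
  have hdt : Data.delta t ∈ startMem s t := by simp [startMem]
  have hgood : ∀ k, s ≤ k → k ≤ t → Data.a k ∉ startMem s t ∧ Data.abar k ∉ startMem s t := by
    intro k hk1 hk2
    constructor
    · intro hm
      simp only [startMem, Finset.mem_insert, Finset.mem_singleton, Data.a.injEq] at hm
      rcases hm with h | h
      · omega
      · exact absurd h (by simp)
    · intro hm
      simp [startMem] at hm
  have hcore := core c s t h1 h2 hw S (startMem s t) s p le_rfl (le_of_lt h2)
    hstage hdelta hdt hgood hp ⟨Mf, hex, hdf⟩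
  rw [mNone]
  apply max_le
  · have := hcore s le_rfl (by omega)
    rw [if_pos rfl] at this
    exact this
  · apply Finset.sup_le
    intro jj hjj
    simp only [Finset.mem_Icc] at hjj
    have := hcore jj (by omega) (by omega)
    rw [if_neg (by omega)] at this
    omega

end Checkpoint
end
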